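/- Let u₁, u₂ be unit vectors, v ∈ ℝ^n with v in the span of -u₁ and vectors orthogonal to both u₁ and u₂ (i.e., v = -αu₁ + w with α > 0, w·u₁ = w·u₂ = 0), and ΔV ≤ 0 (potential decreases). Then the transmitted velocity v⁺ = (I - u₁u₁')v + u₂·sqrt((u₁·v)² - 2ΔV) satisfies ½‖v⁺‖² = ½‖v‖² - ΔV ≥ ½‖v‖²; i.e., a particle descending a potential step always crosses and gains kinetic energy equal to the drop. -/

import Mathlib

/-- Descending a potential step (`ΔV ≤ 0`): a particle with incoming velocity `v = -α u₁ + w`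
(`α > 0`, `w` tangential) always crosses, and the transmitted velocity
`v⁺ = (I - u₁u₁')v + sqrt((u₁·v)² - 2ΔV) u₂` gains kinetic energy equal to the drop:
`½‖v⁺‖² = ½‖v‖² - ΔV ≥ ½‖v‖²`. -/
theorem stmt19 {n : ℕ} (u₁ u₂ w : EuclideanSpace ℝ (Fin n)) (α ΔV : ℝ)
    (h₁ : ‖u₁‖ = 1) (h₂ : ‖u₂‖ = 1) (hα : 0 < α)
    (hw₁ : (inner ℝ w u₁ : ℝ) = 0) (hw₂ : (inner ℝ w u₂ : ℝ) = 0)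
    (hΔV : ΔV ≤ 0)
    (v vplus : EuclideanSpace ℝ (Fin n))
    (hv : v = -(α • u₁) + w)
    (hvplus : vplus = (v - (inner ℝ u₁ v : ℝ) • u₁)
      + Real.sqrt ((inner ℝ u₁ v : ℝ) ^ 2 - 2 * ΔV) • u₂) :
    (1/2) * ‖vplus‖ ^ 2 = (1/2) * ‖v‖ ^ 2 - ΔV ∧
      (1/2) * ‖v‖ ^ 2 - ΔV ≥ (1/2) * ‖v‖ ^ 2 := by
  have hu₁ : (inner ℝ u₁ u₁ : ℝ) = 1 := by
    rw [real_inner_self_eq_norm_sq, h₁]; norm_num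
  have hw₁' : (inner ℝ u₁ w : ℝ) = 0 := by rw [real_inner_comm]; exact hw₁
  have hiv : (inner ℝ u₁ v : ℝ) = -α := by
    rw [hv, inner_add_right, inner_neg_right, inner_smul_right, hu₁, hw₁']
    ring
  have hproj : v - (inner ℝ u₁ v : ℝ) • u₁ = w := by
    rw [hiv, hv]; module
  set c := Real.sqrt ((inner ℝ u₁ v : ℝ) ^ 2 - 2 * ΔV) with hc
  have hnn : (0:ℝ) ≤ (inner ℝ u₁ v : ℝ) ^ 2 - 2 * ΔV := by nlinarith [sq_nonneg (inner ℝ u₁ v : ℝ)]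
  have hc2 : c ^ 2 = (inner ℝ u₁ v : ℝ) ^ 2 - 2 * ΔV := Real.sq_sqrt hnn
  have hw₂' : (inner ℝ u₂ w : ℝ) = 0 := by rw [real_inner_comm]; exact hw₂
  have hu₂ : (inner ℝ u₂ u₂ : ℝ) = 1 := by
    rw [real_inner_self_eq_norm_sq, h₂]; norm_num
  have hvp : vplus = w + c • u₂ := by rw [hvplus, hproj]
  have hnvp : ‖vplus‖ ^ 2 = ‖w‖ ^ 2 + c ^ 2 := by
    rw [hvp, ← real_inner_self_eq_norm_sq, ← real_inner_self_eq_norm_sq]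
    simp only [inner_add_add_self, real_inner_smul_left, real_inner_smul_right,
      hw₂, hw₂',
      hu₂, norm_smul, Real.norm_eq_abs, h₂, mul_one, sq_abs,
      norm_add_sq_real, mul_pow]
    ring
  have hnv : ‖v‖ ^ 2 = α ^ 2 + ‖w‖ ^ 2 := by
    rw [hv, ← real_inner_self_eq_norm_sq, ← real_inner_self_eq_norm_sq]
    simp only [inner_add_add_self, inner_neg_neg, inner_neg_left, inner_neg_right,
      real_inner_smul_left, real_inner_smul_right, real_inner_comm w u₁, hw₁', hw₁, hu₁,
      norm_smul, Real.norm_eq_abs, h₁, mul_one, sq_abs, norm_add_sq_real, norm_sub_sq_real,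
      norm_neg, mul_pow]
    ring
  constructor
  · rw [hnvp, hnv, hc2, hiv]; ring
  · linarith
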